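/- As t → ∞, the matrix exp(t Q^{[C]}) converges entrywise to the matrix M^∞ whose entries are: M^∞_{i,j} = α/(α+β) if i(a) = 1 for all a ∈ C and i(a) = j(a) for all a ∉ C; M^∞_{i,j} = β/(α+β) if i(a) = 0 for all a ∈ C and i(a) = j(a) for all a ∉ C; and M^∞_{i,j} = 0 otherwise. (Limiting transition matrix of a convergence group, from the proof of Theorem 1.) -/

import Mathlib

set_option maxHeartbeats 1000000



open scoped Classical in
/-- The convergence rate matrix `Q^{[C]}` for a convergence group `C ⊆ X` with rates
`α, β`, acting on configurations `i : X → Fin 2`. -/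
noncomputable def Qconv {X : Type*} [Fintype X] [DecidableEq X]
    (C : Finset X) (α β : ℝ) : Matrix (X → Fin 2) (X → Fin 2) ℝ :=
  Matrix.of fun i j =>
    if i = j then
      if ∀ a ∈ C, j a = 0 then -α
      else if ∀ a ∈ C, j a = 1 then -β
      else -(α + β)
    else
      if (∀ a ∈ C, i a = 1) ∧ (∃ a ∈ C, j a = 0) ∧ (∀ a ∉ C, i a = j a) then α
      else if (∀ a ∈ C, i a = 0) ∧ (∃ a ∈ C, j a = 1) ∧ (∀ a ∉ C, i a = j a) then β
      else 0

open scoped Classical in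
noncomputable def Plim {X : Type*} [Fintype X] [DecidableEq X]
    (C : Finset X) (α β : ℝ) : Matrix (X → Fin 2) (X → Fin 2) ℝ :=
  Matrix.of fun i j =>
    if (∀ a ∈ C, i a = 1) ∧ (∀ a ∉ C, i a = j a) then α / (α + β)
    else if (∀ a ∈ C, i a = 0) ∧ (∀ a ∉ C, i a = j a) then β / (α + β)
    else 0

lemma fin2_ne_one {x : Fin 2} (h : x ≠ 1) : x = 0 := by omega

lemma fin2_ne_zero {x : Fin 2} (h : x ≠ 0) : x = 1 := by omega

open scoped Classical in
lemma Qconv_eq {X : Type*} [Fintype X] [DecidableEq X]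
    (C : Finset X) (hC : C.Nonempty) (α β : ℝ) (hα : 0 < α) (hβ : 0 < β)
    (Qconv' : Matrix (X → Fin 2) (X → Fin 2) ℝ)
    (hQ : Qconv' = Matrix.of fun i j =>
      if i = j then
        if ∀ a ∈ C, j a = 0 then -α
        else if ∀ a ∈ C, j a = 1 then -β
        else -(α + β)
      else
        if (∀ a ∈ C, i a = 1) ∧ (∃ a ∈ C, j a = 0) ∧ (∀ a ∉ C, i a = j a) then α
        else if (∀ a ∈ C, i a = 0) ∧ (∃ a ∈ C, j a = 1) ∧ (∀ a ∉ C, i a = j a) then β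
        else 0) :
    Qconv' = (α + β) • Plim C α β - (α + β) • 1 := by
  have hlam : α + β ≠ 0 := by positivity
  subst hQ
  ext i j
  simp only [Matrix.sub_apply, Matrix.smul_apply, Matrix.of_apply, Plim, Matrix.one_apply,
    smul_eq_mul]
  obtain ⟨a₀, ha₀⟩ := hC
  have hTZ : ¬ ((∀ b ∈ C, i b = 0) ∧ ∀ b ∈ C, i b = 1) := by
    rintro ⟨h0, h1⟩
    have := h0 a₀ ha₀; have := h1 a₀ ha₀; simp_all
  by_cases hij : i = j
  · subst hij
    simp only [eq_self_iff_true, if_true, implies_true, and_true, mul_one]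
    by_cases hZ : ∀ a ∈ C, i a = 0 <;> by_cases hT : ∀ a ∈ C, i a = 1
    · exact absurd ⟨hZ, hT⟩ hTZ
    · rw [if_pos hZ, if_neg hT, if_pos hZ]; field_simp; try ring
    · rw [if_neg hZ, if_pos hT, if_pos hT]; field_simp; try ring
    · rw [if_neg hZ, if_neg hT, if_neg hT, if_neg hZ]; ring
  · simp only [if_neg hij, mul_zero, sub_zero]
    by_cases hM : ∀ a ∉ C, i a = j a
    · have hex : ∃ a, i a ≠ j a := by
        by_contra h; push_neg at h; exact hij (funext h)
      obtain ⟨a, ha⟩ := hex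
      have haC : a ∈ C := by by_contra h; exact ha (hM a h)
      have e1 : ((∀ b ∈ C, i b = 1) ∧ (∃ b ∈ C, j b = 0) ∧ (∀ b ∉ C, i b = j b))
          ↔ ((∀ b ∈ C, i b = 1) ∧ (∀ b ∉ C, i b = j b)) := by
        constructor
        · rintro ⟨h1, _, h3⟩; exact ⟨h1, h3⟩
        · rintro ⟨h1, h3⟩
          exact ⟨h1, ⟨a, haC, fin2_ne_one (fun h => ha (by rw [h1 a haC, h]))⟩, h3⟩
      have e2 : ((∀ b ∈ C, i b = 0) ∧ (∃ b ∈ C, j b = 1) ∧ (∀ b ∉ C, i b = j b))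
          ↔ ((∀ b ∈ C, i b = 0) ∧ (∀ b ∉ C, i b = j b)) := by
        constructor
        · rintro ⟨h1, _, h3⟩; exact ⟨h1, h3⟩
        · rintro ⟨h1, h3⟩
          exact ⟨h1, ⟨a, haC, fin2_ne_zero (fun h => ha (by rw [h1 a haC, h]))⟩, h3⟩
      rw [if_congr e1 rfl (if_congr e2 rfl rfl)]
      by_cases hT : ∀ b ∈ C, i b = 1 <;> by_cases hZ : ∀ b ∈ C, i b = 0
      · exact absurd ⟨hZ, hT⟩ hTZ
      · rw [if_pos ⟨hT, hM⟩, if_pos ⟨hT, hM⟩]; field_simp; try ring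
      · have nT : ¬ ((∀ b ∈ C, i b = 1) ∧ (∀ b ∉ C, i b = j b)) := fun h => hT h.1
        have nT' : ¬ ((∀ a ∈ C, i a = 1) ∧ (∀ a ∉ C, i a = j a)) := fun h => hT h.1
        rw [if_neg nT, if_neg nT', if_pos ⟨hZ, hM⟩, if_pos ⟨hZ, hM⟩]; field_simp; try ring
      · have nT : ¬ ((∀ b ∈ C, i b = 1) ∧ (∀ b ∉ C, i b = j b)) := fun h => hT h.1
        have nT' : ¬ ((∀ a ∈ C, i a = 1) ∧ (∀ a ∉ C, i a = j a)) := fun h => hT h.1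
        have nZ : ¬ ((∀ b ∈ C, i b = 0) ∧ (∀ b ∉ C, i b = j b)) := fun h => hZ h.1
        have nZ' : ¬ ((∀ a ∈ C, i a = 0) ∧ (∀ a ∉ C, i a = j a)) := fun h => hZ h.1
        rw [if_neg nT, if_neg nT', if_neg nZ, if_neg nZ']; ring
    · have n1 : ¬ ((∀ a ∈ C, i a = 1) ∧ (∃ a ∈ C, j a = 0) ∧ (∀ a ∉ C, i a = j a)) :=
        fun h => hM h.2.2
      have n2 : ¬ ((∀ a ∈ C, i a = 0) ∧ (∃ a ∈ C, j a = 1) ∧ (∀ a ∉ C, i a = j a)) :=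
        fun h => hM h.2.2
      have n3 : ¬ ((∀ a ∈ C, i a = 1) ∧ (∀ a ∉ C, i a = j a)) := fun h => hM h.2
      have n4 : ¬ ((∀ a ∈ C, i a = 0) ∧ (∀ a ∉ C, i a = j a)) := fun h => hM h.2
      rw [if_neg n1, if_neg n2, if_neg n3, if_neg n4]; ring

lemma Plim_idem {X : Type*} [Fintype X] [DecidableEq X]
    (C : Finset X) (hC : C.Nonempty) (α β : ℝ) (hα : 0 < α) (hβ : 0 < β) :
    Plim C α β * Plim C α β = Plim C α β := by
  classical
  have hlam : α + β ≠ 0 := by positivity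
  obtain ⟨a₀, ha₀⟩ := hC
  ext i j
  rw [Matrix.mul_apply]
  set k0 : X → Fin 2 := fun a => if a ∈ C then 0 else i a with hk0def
  set k1 : X → Fin 2 := fun a => if a ∈ C then 1 else i a with hk1def
  have hne : k0 ≠ k1 := by
    intro h
    have := congrFun h a₀
    simp [hk0def, hk1def, ha₀] at this
  have hk0M : ∀ a ∉ C, i a = k0 a := fun a ha => by simp [hk0def, ha]
  have hk1M : ∀ a ∉ C, i a = k1 a := fun a ha => by simp [hk1def, ha]
  have hk0C : ∀ a ∈ C, k0 a = 0 := fun a ha => by simp [hk0def, ha]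
  have hk1C : ∀ a ∈ C, k1 a = 1 := fun a ha => by simp [hk1def, ha]
  have hk0n1 : ¬ ∀ a ∈ C, k0 a = 1 := fun h => by
    have := h a₀ ha₀; rw [hk0C a₀ ha₀] at this; exact absurd this (by simp)
  have hk1n0 : ¬ ∀ a ∈ C, k1 a = 0 := fun h => by
    have := h a₀ ha₀; rw [hk1C a₀ ha₀] at this; exact absurd this (by simp)
  have hm0 : (∀ a ∉ C, k0 a = j a) ↔ (∀ a ∉ C, i a = j a) := by
    refine forall_congr' fun a => imp_congr_right fun ha => ?_
    rw [← hk0M a ha]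
  have hm1 : (∀ a ∉ C, k1 a = j a) ↔ (∀ a ∉ C, i a = j a) := by
    refine forall_congr' fun a => imp_congr_right fun ha => ?_
    rw [← hk1M a ha]
  -- the summand vanishes away from k0, k1
  have hz : ∀ k ∈ Finset.univ, k ∉ ({k0, k1} : Finset (X → Fin 2)) →
      Plim C α β i k * Plim C α β k j = 0 := by
    intro k _ hk
    simp only [Finset.mem_insert, Finset.mem_singleton, not_or] at hk
    obtain ⟨hne0, hne1⟩ := hk
    by_cases hMik : ∀ a ∉ C, i a = k a
    · by_cases h1 : ∀ a ∈ C, k a = 1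
      · exact absurd (funext fun a => by
          by_cases ha : a ∈ C
          · rw [h1 a ha, hk1C a ha]
          · rw [← hMik a ha, ← hk1M a ha]) hne1
      · by_cases h0 : ∀ a ∈ C, k a = 0
        · exact absurd (funext fun a => by
            by_cases ha : a ∈ C
            · rw [h0 a ha, hk0C a ha]
            · rw [← hMik a ha, ← hk0M a ha]) hne0
        · have : Plim C α β k j = 0 := by
            simp only [Plim, Matrix.of_apply]
            rw [if_neg (fun h => h1 h.1), if_neg (fun h => h0 h.1)]
          rw [this, mul_zero]
    · have : Plim C α β i k = 0 := by
        simp only [Plim, Matrix.of_apply]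
        rw [if_neg (fun h => hMik h.2), if_neg (fun h => hMik h.2)]
      rw [this, zero_mul]
  rw [← Finset.sum_subset (Finset.subset_univ ({k0, k1} : Finset (X → Fin 2))) hz,
    Finset.sum_pair hne]
  have hPik0 : Plim C α β i k0
      = (if ∀ a ∈ C, i a = 1 then α/(α+β) else if ∀ a ∈ C, i a = 0 then β/(α+β) else 0) := by
    simp only [Plim, Matrix.of_apply]
    rw [if_congr (and_iff_left hk0M) rfl (if_congr (and_iff_left hk0M) rfl rfl)]
  have hPik1 : Plim C α β i k1
      = (if ∀ a ∈ C, i a = 1 then α/(α+β) else if ∀ a ∈ C, i a = 0 then β/(α+β) else 0) := by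
    simp only [Plim, Matrix.of_apply]
    rw [if_congr (and_iff_left hk1M) rfl (if_congr (and_iff_left hk1M) rfl rfl)]
  have hPk0j : Plim C α β k0 j = (if ∀ a ∉ C, i a = j a then β/(α+β) else 0) := by
    simp only [Plim, Matrix.of_apply]
    rw [if_neg (fun h => hk0n1 h.1), if_congr ((and_iff_right hk0C).trans hm0) rfl rfl]
  have hPk1j : Plim C α β k1 j = (if ∀ a ∉ C, i a = j a then α/(α+β) else 0) := by
    simp only [Plim, Matrix.of_apply]
    rw [if_congr ((and_iff_right hk1C).trans hm1) rfl rfl]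
    by_cases hM : ∀ a ∉ C, i a = j a
    · rw [if_pos hM, if_pos hM]
    · rw [if_neg hM, if_neg hM, if_neg (fun h => hk1n0 h.1)]
  rw [hPik0, hPik1, hPk0j, hPk1j]
  simp only [Plim, Matrix.of_apply]
  have hTZ : ¬ ((∀ a ∈ C, i a = 1) ∧ ∀ a ∈ C, i a = 0) := by
    rintro ⟨h1, h0⟩
    have := h1 a₀ ha₀; rw [h0 a₀ ha₀] at this; exact absurd this (by simp)
  by_cases hM : ∀ a ∉ C, i a = j a
  · rw [if_pos hM, if_pos hM]
    by_cases hT : ∀ a ∈ C, i a = 1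
    · rw [if_pos hT,
        if_pos (show (∀ a ∈ C, i a = 1) ∧ (∀ a ∉ C, i a = j a) from ⟨hT, hM⟩)]
      field_simp; try ring
    · rw [if_neg (show ¬((∀ a ∈ C, i a = 1) ∧ (∀ a ∉ C, i a = j a)) from fun h => hT h.1),
        if_neg hT]
      by_cases hZ : ∀ a ∈ C, i a = 0
      · rw [if_pos hZ,
          if_pos (show (∀ a ∈ C, i a = 0) ∧ (∀ a ∉ C, i a = j a) from ⟨hZ, hM⟩)]
        field_simp; try ring
      · rw [if_neg (show ¬((∀ a ∈ C, i a = 0) ∧ (∀ a ∉ C, i a = j a)) from fun h => hZ h.1),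
          if_neg hZ]
        ring
  · rw [if_neg hM, if_neg hM,
      if_neg (show ¬((∀ a ∈ C, i a = 1) ∧ (∀ a ∉ C, i a = j a)) from fun h => hM h.2),
      if_neg (show ¬((∀ a ∈ C, i a = 0) ∧ (∀ a ∉ C, i a = j a)) from fun h => hM h.2)]
    ring


section ExpIdem

attribute [local instance] Matrix.linftyOpNormedRing Matrix.linftyOpNormedAlgebra

lemma exp_smul_idem {n : Type*} [Fintype n] [DecidableEq n]
    (E : Matrix n n ℝ) (hE : E * E = E) (c : ℝ) :
    NormedSpace.exp (c • E) = 1 + (Real.exp c - 1) • E := by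
  have hpow : ∀ k : ℕ, E ^ (k + 1) = E := by
    intro k
    induction k with
    | zero => simp
    | succ k ih => rw [pow_succ, ih, hE]
  have hsum : Summable (fun k : ℕ => (Nat.factorial k : ℝ)⁻¹ • (c • E) ^ k) :=
    NormedSpace.expSeries_summable' (𝕂 := ℝ) (c • E)
  rw [NormedSpace.exp_eq_tsum ℝ]
  show (∑' k : ℕ, (Nat.factorial k : ℝ)⁻¹ • (c • E) ^ k) = _
  rw [Summable.tsum_eq_zero_add hsum]
  have h1 : ∀ k : ℕ, (Nat.factorial (k+1) : ℝ)⁻¹ • (c • E) ^ (k+1)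
      = (c ^ (k+1) / Nat.factorial (k+1)) • E := by
    intro k
    rw [smul_pow, hpow, smul_smul, div_eq_inv_mul, mul_comm]
  simp only [h1]
  have hssum : Summable (fun k : ℕ => c ^ (k+1) / Nat.factorial (k+1)) :=
    (Real.summable_pow_div_factorial c).comp_injective (add_left_injective 1)
  rw [Summable.tsum_smul_const hssum]
  have hexp : Real.exp c = 1 + ∑' k : ℕ, c ^ (k+1) / Nat.factorial (k+1) := by
    rw [Real.exp_eq_exp_ℝ, NormedSpace.exp_eq_tsum_div]
    show (∑' k : ℕ, c ^ k / (Nat.factorial k : ℝ)) = _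
    rw [Summable.tsum_eq_zero_add (Real.summable_pow_div_factorial c)]
    simp
  rw [hexp]
  simp

end ExpIdem


open scoped Classical in
/-- Limiting transition matrix of a convergence group (from the proof of Theorem 1):
as `t → ∞`, `exp(t Q^{[C]})` converges entrywise to the matrix `M^∞` with entries
`α/(α+β)`, `β/(α+β)` or `0` as described. -/
theorem exp_Qconv_tendsto {X : Type*} [Fintype X] [DecidableEq X]
    (C : Finset X) (hC : C.Nonempty) (α β : ℝ) (hα : 0 < α) (hβ : 0 < β) :
    ∀ i j : X → Fin 2,
      Filter.Tendsto (fun t : ℝ => NormedSpace.exp (t • Qconv C α β) i j)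
        Filter.atTop
        (nhds (if (∀ a ∈ C, i a = 1) ∧ (∀ a ∉ C, i a = j a) then α / (α + β)
          else if (∀ a ∈ C, i a = 0) ∧ (∀ a ∉ C, i a = j a) then β / (α + β)
          else 0)) := by
  intro i j
  have hlam : (0:ℝ) < α + β := by positivity
  have hQ : Qconv C α β = (α + β) • Plim C α β - (α + β) • 1 :=
    Qconv_eq C hC α β hα hβ _ rfl
  have hP := Plim_idem C hC α β hα hβ
  have hE : (1 - Plim C α β) * (1 - Plim C α β) = 1 - Plim C α β := by
    calc (1 - Plim C α β) * (1 - Plim C α β)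
        = 1 - Plim C α β - Plim C α β + Plim C α β * Plim C α β := by noncomm_ring
      _ = 1 - Plim C α β := by rw [hP]; abel
  have hsm : ∀ t : ℝ, t • Qconv C α β = (-((α+β)*t)) • (1 - Plim C α β) := by
    intro t; rw [hQ]; module
  have key : ∀ t : ℝ, NormedSpace.exp (t • Qconv C α β)
      = 1 + (Real.exp (-((α+β)*t)) - 1) • (1 - Plim C α β) := by
    intro t; rw [hsm t, exp_smul_idem _ hE]
  simp only [key, Matrix.add_apply, Matrix.smul_apply, Matrix.sub_apply, Matrix.one_apply,
    smul_eq_mul]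
  have h0 : Filter.Tendsto (fun t : ℝ => Real.exp (-((α+β)*t))) Filter.atTop (nhds 0) := by
    apply Real.tendsto_exp_atBot.comp
    exact Filter.tendsto_neg_atTop_atBot.comp (Filter.Tendsto.const_mul_atTop hlam Filter.tendsto_id)
  have htt : Filter.Tendsto
      (fun t : ℝ => (if i = j then (1:ℝ) else 0)
        + (Real.exp (-((α+β)*t)) - 1) * ((if i = j then (1:ℝ) else 0) - Plim C α β i j))
      Filter.atTop
      (nhds ((if i = j then (1:ℝ) else 0)
        + ((0:ℝ) - 1) * ((if i = j then (1:ℝ) else 0) - Plim C α β i j))) :=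
    Filter.Tendsto.const_add _ ((h0.sub tendsto_const_nhds).mul_const _)
  have hval : (if (∀ a ∈ C, i a = 1) ∧ (∀ a ∉ C, i a = j a) then α / (α + β)
      else if (∀ a ∈ C, i a = 0) ∧ (∀ a ∉ C, i a = j a) then β / (α + β)
      else 0)
      = (if i = j then (1:ℝ) else 0)
        + ((0:ℝ) - 1) * ((if i = j then (1:ℝ) else 0) - Plim C α β i j) := by
    show Plim C α β i j = _
    ring
  rw [hval]
  exact htt
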